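/- Let H = [H1 H2] have full column rank with QR decomposition H = [Q1 Q2]·[[R1, E],[0, R2]]. If H2^T H2 is diagonal and E^T E is diagonal, then R2 is a diagonal matrix. -/

import Mathlib

open Matrix

/-- H = [H1 H2] full column rank with QR decomposition
H = [Q1 Q2]·[[R1,E],[0,R2]]; if H2ᵀH2 and EᵀE are diagonal then R2 is diagonal. -/
theorem stmt1 {m k1 k2 : ℕ}
    (H1 : Matrix (Fin m) (Fin k1) ℝ) (H2 : Matrix (Fin m) (Fin k2) ℝ)
    (Q1 : Matrix (Fin m) (Fin k1) ℝ) (Q2 : Matrix (Fin m) (Fin k2) ℝ)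
    (R1 : Matrix (Fin k1) (Fin k1) ℝ) (E : Matrix (Fin k1) (Fin k2) ℝ)
    (R2 : Matrix (Fin k2) (Fin k2) ℝ)
    (hrank : (Matrix.fromCols H1 H2).rank = k1 + k2)
    (hQR : Matrix.fromCols H1 H2 =
      Matrix.fromCols Q1 Q2 * Matrix.fromBlocks R1 E 0 R2)
    (hQ : (Matrix.fromCols Q1 Q2)ᵀ * Matrix.fromCols Q1 Q2 = 1)
    (hTri : (Matrix.fromBlocks R1 E 0 R2).BlockTriangular
      (Sum.elim (fun i : Fin k1 => (i : ℕ)) (fun j : Fin k2 => k1 + (j : ℕ))))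
    (hPos : ∀ i, 0 < Matrix.fromBlocks R1 E 0 R2 i i)
    (hE : E = Q1ᵀ * H2)
    (hDiag1 : (H2ᵀ * H2).IsDiag) (hDiag2 : (Eᵀ * E).IsDiag) :
    R2.IsDiag := by
  -- Extract orthonormality relations
  rw [transpose_fromCols, fromRows_mul_fromCols, ← fromBlocks_one] at hQ
  obtain ⟨h11, h12, h21, h22⟩ := fromBlocks_inj.mp hQ
  -- Extract H2 = Q1 * E + Q2 * R2
  rw [fromCols_mul_fromBlocks] at hQR
  obtain ⟨-, hH2⟩ := (fromCols_ext_iff _ _ _ _).mp hQR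
  -- R2ᵀ * R2 is diagonal
  have hD : (R2ᵀ * R2).IsDiag := by
    have : R2ᵀ * R2 = H2ᵀ * H2 - Eᵀ * E := by
      rw [hH2]
      have expand : (Eᵀ * Q1ᵀ + R2ᵀ * Q2ᵀ) * (Q1 * E + Q2 * R2) =
          Eᵀ * (Q1ᵀ * Q1) * E + Eᵀ * (Q1ᵀ * Q2) * R2 +
          R2ᵀ * (Q2ᵀ * Q1) * E + R2ᵀ * (Q2ᵀ * Q2) * R2 := by
        simp only [Matrix.add_mul, Matrix.mul_add, Matrix.mul_assoc]
        abel
      simp only [transpose_add, transpose_mul, expand, h11, h12, h21, h22,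
        Matrix.mul_one, Matrix.mul_zero, Matrix.zero_mul, Matrix.one_mul]
      abel
    rw [this]
    exact hDiag1.sub hDiag2
  -- triangularity and positivity for R2
  have htri : ∀ i j : Fin k2, (j : ℕ) < i → R2 i j = 0 := by
    intro i j h
    have := hTri (i := Sum.inr i) (j := Sum.inr j) (by simpa using h)
    simpa using this
  have hpos : ∀ i : Fin k2, 0 < R2 i i := fun i => by simpa using hPos (Sum.inr i)
  -- key: upper entries vanish, by strong induction on the row index
  have key : ∀ n (i j : Fin k2), (i : ℕ) = n → (i : ℕ) < j → R2 i j = 0 := by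
    intro n
    induction n using Nat.strong_induction_on with
    | _ n ih =>
      intro i j hi hij
      have hne : i ≠ j := fun h => by simp [h] at hij
      have h0 : (R2ᵀ * R2) i j = 0 := hD hne
      rw [mul_apply] at h0
      have hsum : ∑ l, R2ᵀ i l * R2 l j = R2 i i * R2 i j := by
        refine Finset.sum_eq_single i ?_ (by simp)
        intro l _ hl
        rcases lt_or_gt_of_ne (fun h : (l : ℕ) = i => hl (Fin.ext h)) with h | h
        · have : R2 l j = 0 := ih l (hi ▸ h) l j rfl (lt_trans h hij)
          simp [this]
        · have : R2 l i = 0 := htri l i h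
          simp [transpose_apply, this]
      rw [hsum] at h0
      exact (mul_eq_zero.mp h0).resolve_left (ne_of_gt (hpos i))
  intro i j hne
  rcases lt_or_gt_of_ne hne with h | h
  · exact key i i j rfl h
  · exact htri i j h
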